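/- For any interval I of k+1 consecutive indices and any secondary structure P, the number of stacking pairs of P having at least one of their four base indices in I is at most k+2. -/

import Mathlib

/-- A secondary structure in the purely combinatorial sense: base pairs `(i,j)` with
`i+2 ≤ j`, no two pairs sharing an index. -/
def DisjointPairs (P : Finset (ℕ × ℕ)) : Prop :=
  (∀ p ∈ P, p.1 + 2 ≤ p.2) ∧
  (∀ p ∈ P, ∀ q ∈ P, p ≠ q → p.1 ≠ q.1 ∧ p.1 ≠ q.2 ∧ p.2 ≠ q.1 ∧ p.2 ≠ q.2)

/-- The stacking pairs of `P`, each recorded by its outer base pair `(i,j)`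
(so that `(i,j), (i+1,j-1) ∈ P` and `i+4 ≤ j`). -/
def spSet (P : Finset (ℕ × ℕ)) : Finset (ℕ × ℕ) :=
  P.filter (fun p => (p.1 + 1, p.2 - 1) ∈ P ∧ p.1 + 4 ≤ p.2)

/-- For any interval `I = [a, a+k]` of `k+1` consecutive indices, at most `k+2`
stacking pairs of a secondary structure `P` have one of their four base indices in `I`. -/
theorem interval_touches_at_most
    (P : Finset (ℕ × ℕ)) (hP : DisjointPairs P) (a k : ℕ) :
    ((spSet P).filter (fun s =>
        s.1 ∈ Finset.Icc a (a + k) ∨ s.1 + 1 ∈ Finset.Icc a (a + k) ∨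
        s.2 - 1 ∈ Finset.Icc a (a + k) ∨ s.2 ∈ Finset.Icc a (a + k))).card ≤ k + 2 := by
  classical
  have hcard : (Finset.Icc a (a + k + 1)).card = k + 2 := by
    rw [Nat.card_Icc]; omega
  rw [← hcard]
  apply Finset.card_le_card_of_injOn
    (fun s => if s.1 + 1 ∈ Finset.Icc a (a + k + 1) then s.1 + 1 else s.2)
  · intro s hs
    rw [Finset.mem_coe, Finset.mem_filter] at hs
    obtain ⟨hsp, hcond⟩ := hs
    rw [spSet, Finset.mem_filter] at hsp
    obtain ⟨hsP, hinner, hle⟩ := hsp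
    simp only [Finset.mem_coe, Finset.mem_Icc] at hcond ⊢
    split_ifs with h
    · simpa using h
    · omega
  · intro s hs t ht heq
    rw [Finset.mem_coe, Finset.mem_filter] at hs ht
    obtain ⟨hsp, _⟩ := hs
    obtain ⟨htp, _⟩ := ht
    rw [spSet, Finset.mem_filter] at hsp htp
    obtain ⟨hsP, hsinner, hsle⟩ := hsp
    obtain ⟨htP, htinner, htle⟩ := htp
    simp only at heq
    by_contra hne
    split_ifs at heq with h1 h2 h2
    · -- s.1 + 1 = t.1 + 1
      have := hP.2 s hsP t htP hne
      omega
    · -- s.1 + 1 = t.2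
      have hd : (s.1 + 1, s.2 - 1) ≠ t := by
        intro hEq
        have h1 : s.1 + 1 = t.1 := congrArg Prod.fst hEq
        have h2 : s.2 - 1 = t.2 := congrArg Prod.snd hEq
        omega
      have := hP.2 _ hsinner t htP hd
      simp only at this
      omega
    · -- s.2 = t.1 + 1
      have hd : s ≠ (t.1 + 1, t.2 - 1) := by
        intro hEq
        have h1 : s.1 = t.1 + 1 := congrArg Prod.fst hEq
        have h2 : s.2 = t.2 - 1 := congrArg Prod.snd hEq
        omega
      have := hP.2 s hsP _ htinner hd
      simp only at this
      omega
    · -- s.2 = t.2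
      have := hP.2 s hsP t htP hne
      omega
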